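/- Let N be an even positive integer, M = N/2, L > 0, ω_N = e^{−2πi/N}, and fix γ ∈ (0,1), ε > 0, μ > 0, μ₂ > 0, b > 0, c ≤ 0, with the Hamiltonian condition d = b. With D_N the Fourier pseudospectral differentiation matrix with entries (D_N)_{l j} = Re( (π/(N L)) Σ_{m=−M}^{M−1} ω_N^{m(j−l)} i·m ), L_{μ₂,h} the matrix with entries Re( (1/N) Σ_{m=−M}^{M−1} ω_N^{m(j−l)} l(πm/L) ) where l is the symbol of L_{μ₂}, J_{b,h} = I − μ b D_N², J_{c,h} = I + μ c D_N², and D the flip matrix (D U)_j = U_{N+1−j}: suppose Z, U : [0,∞) → ℝ^N are differentiable and satisfy, for all t ≥ 0, the semidiscrete system J_{b,h}·Z′(t) + L_{μ₂,h}·D_N·U(t) − (ε/γ)·D_N·(Z(t)∘U(t)) = 0 and J_{b,h}·U′(t) + (1 − γ)·J_{c,h}·D_N·Z(t) − (ε/(2γ))·D_N·(U(t)∘U(t)) = 0, together with the symmetry D·Z(t) = Z(t) and D·U(t) = U(t) for all t ≥ 0. Then the discrete momentum I_h(Z(t), U(t)) = ⟨Z(t), J_{b,h}·U(t)⟩ is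 constant in time: I_h(Z(t), U(t)) = I_h(Z(0), U(0)) for all t ≥ 0. -/

import Mathlib

/-- The hyperbolic cotangent. -/
noncomputable def coth (y : ℝ) : ℝ := Real.cosh y / Real.sinh y

/-- The Fourier symbol `l(k)` of the nonlocal operator `L_{μ₂}`, with the limit value at
`k = 0`. -/
noncomputable def lSym (γ a μ μ₂ k : ℝ) : ℝ :=
  if k = 0 then
    1 / γ - Real.sqrt μ / (γ ^ 2 * Real.sqrt μ₂) + μ / (γ ^ 3 * μ₂)
  else
    1 / γ - (Real.sqrt μ / γ ^ 2) * (|k| * coth (Real.sqrt μ₂ * |k|))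
      - (μ / γ) * (a - (1 / γ ^ 2) * (coth (Real.sqrt μ₂ * |k|)) ^ 2) * k ^ 2

/-- The Fourier pseudospectral differentiation matrix `D_N` on the uniform grid of `N`
collocation points of `(-L, L)`. -/
noncomputable def DNmat (N : ℕ) (L : ℝ) : Matrix (Fin N) (Fin N) ℝ :=
  fun l j =>
    (((Real.pi / (N * L) : ℝ) : ℂ) *
      ∑ m ∈ Finset.Icc (-((N : ℤ) / 2)) ((N : ℤ) / 2 - 1),
        Complex.exp (-2 * Real.pi * Complex.I / N) ^ (m * ((j : ℤ) - (l : ℤ)))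
          * (Complex.I * m)).re

/-- The pseudospectral discretization `L_{μ₂,h}` of the nonlocal operator `L_{μ₂}`. -/
noncomputable def Lmat (N : ℕ) (L γ a μ μ₂ : ℝ) : Matrix (Fin N) (Fin N) ℝ :=
  fun l j =>
    (((1 / N : ℝ) : ℂ) *
      ∑ m ∈ Finset.Icc (-((N : ℤ) / 2)) ((N : ℤ) / 2 - 1),
        Complex.exp (-2 * Real.pi * Complex.I / N) ^ (m * ((j : ℤ) - (l : ℤ)))
          * ((lSym γ a μ μ₂ (Real.pi * m / L) : ℝ) : ℂ)).re

/-- The reflection (flip) matrix `D` on `ℝ^N`, `(D U)_j = U_{N+1-j}` (1-indexed). -/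
def flipMat (N : ℕ) : Matrix (Fin N) (Fin N) ℝ :=
  fun l j => if (l : ℕ) + (j : ℕ) = N - 1 then 1 else 0

open Complex Finset Matrix

private lemma conj_exp_zpow (N : ℕ) (x : ℤ) :
    (starRingEnd ℂ) (Complex.exp (-2 * Real.pi * Complex.I / N) ^ x)
      = Complex.exp (-2 * Real.pi * Complex.I / N) ^ (-x) := by
  have h : (starRingEnd ℂ) (Complex.exp (-2 * Real.pi * Complex.I / N))
      = (Complex.exp (-2 * Real.pi * Complex.I / N))⁻¹ := by
    rw [← Complex.exp_conj, ← Complex.exp_neg]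
    congr 1
    simp [map_div₀, Complex.conj_I, map_ofNat]
    ring
  rw [map_zpow₀, h, _root_.inv_zpow, ← _root_.zpow_neg]

private lemma rev_int_sub {N : ℕ} (l j : Fin N) :
    ((j.rev : ℤ) - (l.rev : ℤ)) = ((l : ℤ) - (j : ℤ)) := by
  have hl := l.isLt; have hj := j.isLt
  simp only [Fin.val_rev]  -- ?
  omega

private lemma DN_toeplitz (N : ℕ) (L : ℝ) (l j : Fin N) :
    DNmat N L l.rev j.rev = DNmat N L j l := by
  unfold DNmat
  rw [rev_int_sub]

private lemma L_toeplitz (N : ℕ) (L γ a μ μ₂ : ℝ) (l j : Fin N) :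
    Lmat N L γ a μ μ₂ l.rev j.rev = Lmat N L γ a μ μ₂ j l := by
  unfold Lmat
  rw [rev_int_sub]

private lemma DN_antisym (N : ℕ) (L : ℝ) (l j : Fin N) :
    DNmat N L j l = - DNmat N L l j := by
  unfold DNmat
  have key : ∀ m : ℤ,
      Complex.exp (-2*Real.pi*Complex.I/N) ^ (m * ((l:ℤ) - (j:ℤ))) * (Complex.I * m)
        = -(starRingEnd ℂ)
            (Complex.exp (-2*Real.pi*Complex.I/N) ^ (m * ((j:ℤ)-(l:ℤ))) * (Complex.I * m)) := by
    intro m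
    rw [_root_.map_mul, conj_exp_zpow]
    have hexp : -(m * ((j:ℤ)-(l:ℤ))) = m * ((l:ℤ)-(j:ℤ)) := by ring
    rw [hexp, _root_.map_mul, Complex.conj_I, map_intCast]
    ring
  rw [Finset.sum_congr rfl (fun m _ => key m)]
  rw [Finset.sum_neg_distrib, ← map_sum, mul_neg, Complex.neg_re,
    Complex.re_ofReal_mul, Complex.re_ofReal_mul, Complex.conj_re]

private lemma L_symm (N : ℕ) (L γ a μ μ₂ : ℝ) (l j : Fin N) :
    Lmat N L γ a μ μ₂ j l = Lmat N L γ a μ μ₂ l j := by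
  unfold Lmat
  have key : ∀ m : ℤ,
      Complex.exp (-2*Real.pi*Complex.I/N) ^ (m * ((l:ℤ) - (j:ℤ)))
          * ((lSym γ a μ μ₂ (Real.pi * m / L) : ℝ) : ℂ)
        = (starRingEnd ℂ)
            (Complex.exp (-2*Real.pi*Complex.I/N) ^ (m * ((j:ℤ)-(l:ℤ)))
              * ((lSym γ a μ μ₂ (Real.pi * m / L) : ℝ) : ℂ)) := by
    intro m
    rw [_root_.map_mul, conj_exp_zpow, Complex.conj_ofReal]
    congr 2
    ring
  rw [Finset.sum_congr rfl (fun m _ => key m), ← map_sum,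
    Complex.re_ofReal_mul, Complex.re_ofReal_mul, Complex.conj_re]

private lemma flipMat_eq {N : ℕ} (l j : Fin N) :
    flipMat N l j = if j = l.rev then 1 else 0 := by
  have hl := l.isLt
  have hj := j.isLt
  have h : ((l:ℕ) + (j:ℕ) = N - 1) ↔ j = l.rev := by
    rw [Fin.ext_iff, Fin.val_rev]
    omega
  simp [flipMat, h]

private lemma flip_mulVec {N : ℕ} (x : Fin N → ℝ) :
    (flipMat N).mulVec x = fun l => x l.rev := by
  funext l
  simp [Matrix.mulVec, dotProduct, flipMat_eq, ite_mul]

private lemma dot_zero {N : ℕ} (x y : Fin N → ℝ) (hx : ∀ l, x l.rev = x l)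
    (hy : ∀ l, y l.rev = -y l) : dotProduct x y = 0 := by
  have h : (∑ l : Fin N, x l.rev * y l.rev) = ∑ l : Fin N, x l * y l :=
    Fintype.sum_bijective Fin.rev Fin.rev_involutive.bijective
      (fun l => x l.rev * y l.rev) (fun l => x l * y l) (fun l => rfl)
  simp only [hx, hy, mul_neg, Finset.sum_neg_distrib] at h
  have : (∑ l, x l * y l) = 0 := by linarith
  simpa [dotProduct] using this

private lemma mulVec_rev {N : ℕ} (A : Matrix (Fin N) (Fin N) ℝ)
    (hA : ∀ l j, A l.rev j.rev = A j l) (σ : ℝ) (hT : ∀ l j, A j l = σ * A l j)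
    (x : Fin N → ℝ) (ε : ℝ) (hx : ∀ l, x l.rev = ε * x l) (l : Fin N) :
    (A.mulVec x) l.rev = (σ * ε) * (A.mulVec x) l := by
  have h1 : (A.mulVec x) l.rev = ∑ j : Fin N, A l.rev j.rev * x j.rev :=
    (Fintype.sum_bijective Fin.rev Fin.rev_involutive.bijective
      (fun j => A l.rev j.rev * x j.rev) (fun j => A l.rev j * x j) (fun j => rfl)).symm
  rw [h1]
  have h2 : ∀ j, A l.rev j.rev * x j.rev = (σ * ε) * (A l j * x j) := by
    intro j
    rw [hA, hx, hT]
    ring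
  rw [Finset.sum_congr rfl (fun j _ => h2 j), ← Finset.mul_sum]
  rfl

theorem discrete_momentum_conservation' (N : ℕ) (hN : 0 < N)
    (L : ℝ) (γ ε μ μ₂ b c a : ℝ)
    (Z U Z' U' : ℝ → Fin N → ℝ)
    (hZdiff : ∀ t ≥ (0 : ℝ), ∀ i : Fin N,
      HasDerivWithinAt (fun s => Z s i) (Z' t i) (Set.Ici 0) t)
    (hUdiff : ∀ t ≥ (0 : ℝ), ∀ i : Fin N,
      HasDerivWithinAt (fun s => U s i) (U' t i) (Set.Ici 0) t)
    (heq1 : ∀ t ≥ (0 : ℝ),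
      (1 - (μ * b) • (DNmat N L) ^ 2).mulVec (Z' t)
        + (Lmat N L γ a μ μ₂).mulVec ((DNmat N L).mulVec (U t))
        - (ε / γ) • (DNmat N L).mulVec (fun i => Z t i * U t i) = 0)
    (heq2 : ∀ t ≥ (0 : ℝ),
      (1 - (μ * b) • (DNmat N L) ^ 2).mulVec (U' t)
        + (1 - γ) • (1 + (μ * c) • (DNmat N L) ^ 2).mulVec ((DNmat N L).mulVec (Z t))
        - (ε / (2 * γ)) • (DNmat N L).mulVec (fun i => U t i * U t i) = 0)
    (hsymZ : ∀ t ≥ (0 : ℝ), (flipMat N).mulVec (Z t) = Z t)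
    (hsymU : ∀ t ≥ (0 : ℝ), (flipMat N).mulVec (U t) = U t) :
    ∀ t ≥ (0 : ℝ),
      dotProduct (Z t) ((1 - (μ * b) • (DNmat N L) ^ 2).mulVec (U t))
        = dotProduct (Z 0) ((1 - (μ * b) • (DNmat N L) ^ 2).mulVec (U 0)) := by
  set D := DNmat N L with hD
  set Lm := Lmat N L γ a μ μ₂ with hLm
  set J : Matrix (Fin N) (Fin N) ℝ := 1 - (μ * b) • D ^ 2 with hJ
  set φ : ℝ → ℝ := fun s => dotProduct (Z s) (J.mulVec (U s)) with hφ
  -- symmetry of J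
  have hDT : D.transpose = -D := by
    ext l j
    rw [Matrix.transpose_apply, Matrix.neg_apply]
    exact DN_antisym N L l j
  have hJT : J.transpose = J := by
    rw [hJ, Matrix.transpose_sub, Matrix.transpose_one, Matrix.transpose_smul,
      Matrix.transpose_pow, hDT, neg_sq]
  have hJsym : ∀ v w : Fin N → ℝ,
      dotProduct v (J.mulVec w) = dotProduct (J.mulVec v) w := by
    intro v w
    rw [Matrix.dotProduct_mulVec, ← Matrix.mulVec_transpose, hJT]
  have hDtoe := DN_toeplitz N L
  have hDσ : ∀ l j : Fin N, D j l = (-1 : ℝ) * D l j := fun l j => by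
    rw [hD, DN_antisym]; ring
  have hLtoe := L_toeplitz N L γ a μ μ₂
  have hLσ : ∀ l j : Fin N, Lm j l = (1 : ℝ) * Lm l j := fun l j => by
    rw [hLm, L_symm]; ring
  -- zero derivative
  have hkey : ∀ x ≥ (0 : ℝ), HasDerivWithinAt φ 0 (Set.Ici 0) x := by
    intro x hx
    have hZe : ∀ l : Fin N, Z x l.rev = Z x l := fun l =>
      congrFun ((flip_mulVec (Z x)).symm.trans (hsymZ x hx)) l
    have hUe : ∀ l : Fin N, U x l.rev = U x l := fun l =>
      congrFun ((flip_mulVec (U x)).symm.trans (hsymU x hx)) l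
    -- parities
    have hUe' : ∀ l : Fin N, U x l.rev = (1 : ℝ) * U x l := fun l => by
      rw [hUe]; ring
    have hZe' : ∀ l : Fin N, Z x l.rev = (1 : ℝ) * Z x l := fun l => by
      rw [hZe]; ring
    have hDU : ∀ l : Fin N, (D.mulVec (U x)) l.rev = -(D.mulVec (U x)) l := fun l => by
      have := mulVec_rev D hDtoe (-1) hDσ (U x) 1 hUe' l; linarith
    have hDU' : ∀ l : Fin N, (D.mulVec (U x)) l.rev = (-1 : ℝ) * (D.mulVec (U x)) l :=
      fun l => by rw [hDU]; ring
    have hDZ : ∀ l : Fin N, (D.mulVec (Z x)) l.rev = -(D.mulVec (Z x)) l := fun l => by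
      have := mulVec_rev D hDtoe (-1) hDσ (Z x) 1 hZe' l; linarith
    have hDZ' : ∀ l : Fin N, (D.mulVec (Z x)) l.rev = (-1 : ℝ) * (D.mulVec (Z x)) l :=
      fun l => by rw [hDZ]; ring
    have hLDU : ∀ l : Fin N,
        (Lm.mulVec (D.mulVec (U x))) l.rev = -(Lm.mulVec (D.mulVec (U x))) l := fun l => by
      have := mulVec_rev Lm hLtoe 1 hLσ (D.mulVec (U x)) (-1) hDU' l; linarith
    have hD2Z : ∀ l : Fin N,
        (D.mulVec (D.mulVec (Z x))) l.rev = (1 : ℝ) * (D.mulVec (D.mulVec (Z x))) l :=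
      fun l => by have := mulVec_rev D hDtoe (-1) hDσ (D.mulVec (Z x)) (-1) hDZ' l; linarith
    have hD3Z : ∀ l : Fin N,
        (D.mulVec (D.mulVec (D.mulVec (Z x)))) l.rev
          = -(D.mulVec (D.mulVec (D.mulVec (Z x)))) l :=
      fun l => by
        have := mulVec_rev D hDtoe (-1) hDσ (D.mulVec (D.mulVec (Z x))) 1 hD2Z l; linarith
    have hZU : ∀ l : Fin N, (fun i => Z x i * U x i) l.rev = (1:ℝ) * (fun i => Z x i * U x i) l :=
      fun l => by simp only [hZe, hUe]; ring
    have hUU : ∀ l : Fin N, (fun i => U x i * U x i) l.rev = (1:ℝ) * (fun i => U x i * U x i) l :=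
      fun l => by simp only [hUe]; ring
    have hDZU : ∀ l : Fin N, (D.mulVec (fun i => Z x i * U x i)) l.rev
        = -(D.mulVec (fun i => Z x i * U x i)) l := fun l => by
      have := mulVec_rev D hDtoe (-1) hDσ (fun i => Z x i * U x i) 1 hZU l; linarith
    have hDUU : ∀ l : Fin N, (D.mulVec (fun i => U x i * U x i)) l.rev
        = -(D.mulVec (fun i => U x i * U x i)) l := fun l => by
      have := mulVec_rev D hDtoe (-1) hDσ (fun i => U x i * U x i) 1 hUU l; linarith
    -- zero inner products
    have z1 : dotProduct (Lm.mulVec (D.mulVec (U x))) (U x) = 0 := by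
      rw [dotProduct_comm]; exact dot_zero _ _ hUe hLDU
    have z2 : dotProduct (Z x) (D.mulVec (Z x)) = 0 := dot_zero _ _ hZe hDZ
    have z3 : dotProduct (Z x) (D.mulVec (D.mulVec (D.mulVec (Z x)))) = 0 :=
      dot_zero _ _ hZe hD3Z
    have z4 : dotProduct ((D.mulVec (fun i => Z x i * U x i))) (U x) = 0 := by
      rw [dotProduct_comm]; exact dot_zero _ _ hUe hDZU
    have z5 : dotProduct (Z x) (D.mulVec (fun i => U x i * U x i)) = 0 :=
      dot_zero _ _ hZe hDUU
    -- rearrange equations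
    have e1 : J.mulVec (Z' x)
        = (ε / γ) • D.mulVec (fun i => Z x i * U x i) - Lm.mulVec (D.mulVec (U x)) := by
      have h := heq1 x hx
      rw [sub_eq_zero] at h
      exact eq_sub_of_add_eq h
    have e2 : J.mulVec (U' x)
        = (ε / (2 * γ)) • D.mulVec (fun i => U x i * U x i)
            - (1 - γ) • (1 + (μ * c) • D ^ 2).mulVec (D.mulVec (Z x)) := by
      have h := heq2 x hx
      rw [sub_eq_zero] at h
      exact eq_sub_of_add_eq h
    have hJc : (1 + (μ * c) • D ^ 2).mulVec (D.mulVec (Z x))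
        = D.mulVec (Z x) + (μ * c) • D.mulVec (D.mulVec (D.mulVec (Z x))) := by
      rw [Matrix.add_mulVec, Matrix.one_mulVec, Matrix.smul_mulVec, pow_two,
        ← Matrix.mulVec_mulVec]
    have t1 : dotProduct (Z' x) (J.mulVec (U x)) = 0 := by
      rw [hJsym (Z' x) (U x), e1, sub_dotProduct, smul_dotProduct, z4, z1]
      simp
    have t2 : dotProduct (Z x) (J.mulVec (U' x)) = 0 := by
      rw [e2, dotProduct_sub, dotProduct_smul, z5, hJc,
        dotProduct_smul, dotProduct_add, dotProduct_smul, z2, z3]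
      simp
    -- the derivative of φ
    have hd : HasDerivWithinAt (fun s => ∑ l : Fin N, Z s l * ∑ j : Fin N, J l j * U s j)
        (∑ l : Fin N, (Z' x l * ∑ j : Fin N, J l j * U x j
          + Z x l * ∑ j : Fin N, J l j * U' x j)) (Set.Ici 0) x :=
      HasDerivWithinAt.fun_sum fun l _ =>
        (hZdiff x hx l).mul (HasDerivWithinAt.fun_sum fun j _ => (hUdiff x hx j).const_mul (J l j))
    have h0 : (∑ l : Fin N, (Z' x l * ∑ j : Fin N, J l j * U x j
        + Z x l * ∑ j : Fin N, J l j * U' x j)) = 0 := by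
      rw [Finset.sum_add_distrib]
      have e1' : (∑ l : Fin N, Z' x l * ∑ j : Fin N, J l j * U x j)
          = dotProduct (Z' x) (J.mulVec (U x)) := rfl
      have e2' : (∑ l : Fin N, Z x l * ∑ j : Fin N, J l j * U' x j)
          = dotProduct (Z x) (J.mulVec (U' x)) := rfl
      rw [e1', e2', t1, t2, add_zero]
    rw [h0] at hd
    exact hd
  intro t ht
  have hcont : ContinuousOn φ (Set.Icc 0 t) := fun x hx =>
    ((hkey x hx.1).continuousWithinAt).mono Set.Icc_subset_Ici_self
  exact constant_of_has_deriv_right_zero hcont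
    (fun x hx => (hkey x hx.1).mono (Set.Ici_subset_Ici.mpr hx.1)) t
    (Set.right_mem_Icc.mpr ht)

/-- For symmetric solutions of the Fourier collocation semidiscretization of the scaled
Boussinesq/Full dispersion system in the Hamiltonian case `d = b`, the discrete momentum
`I_h(Z, U) = ⟨Z, J_{b,h} U⟩` is conserved in time. -/
theorem discrete_momentum_conservation (N : ℕ) (hN : 0 < N) (hNe : Even N)
    (L : ℝ) (hL : 0 < L) (γ ε μ μ₂ b c a : ℝ) (hγ : γ ∈ Set.Ioo (0 : ℝ) 1)
    (hε : 0 < ε) (hμ : 0 < μ) (hμ₂ : 0 < μ₂) (hb : 0 < b) (hc : c ≤ 0) (ha : a ≤ 0)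
    (Z U Z' U' : ℝ → Fin N → ℝ)
    (hZdiff : ∀ t ≥ (0 : ℝ), ∀ i : Fin N,
      HasDerivWithinAt (fun s => Z s i) (Z' t i) (Set.Ici 0) t)
    (hUdiff : ∀ t ≥ (0 : ℝ), ∀ i : Fin N,
      HasDerivWithinAt (fun s => U s i) (U' t i) (Set.Ici 0) t)
    (heq1 : ∀ t ≥ (0 : ℝ),
      (1 - (μ * b) • (DNmat N L) ^ 2).mulVec (Z' t)
        + (Lmat N L γ a μ μ₂).mulVec ((DNmat N L).mulVec (U t))
        - (ε / γ) • (DNmat N L).mulVec (fun i => Z t i * U t i) = 0)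
    (heq2 : ∀ t ≥ (0 : ℝ),
      (1 - (μ * b) • (DNmat N L) ^ 2).mulVec (U' t)
        + (1 - γ) • (1 + (μ * c) • (DNmat N L) ^ 2).mulVec ((DNmat N L).mulVec (Z t))
        - (ε / (2 * γ)) • (DNmat N L).mulVec (fun i => U t i * U t i) = 0)
    (hsymZ : ∀ t ≥ (0 : ℝ), (flipMat N).mulVec (Z t) = Z t)
    (hsymU : ∀ t ≥ (0 : ℝ), (flipMat N).mulVec (U t) = U t) :
    ∀ t ≥ (0 : ℝ),
      dotProduct (Z t) ((1 - (μ * b) • (DNmat N L) ^ 2).mulVec (U t))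
        = dotProduct (Z 0) ((1 - (μ * b) • (DNmat N L) ^ 2).mulVec (U 0)) := by
  exact discrete_momentum_conservation' N hN L γ ε μ μ₂ b c a Z U Z' U' hZdiff hUdiff heq1 heq2 hsymZ hsymU
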